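/- Let (X,d) be a metric space with a geodesic selection σ satisfying condition (C): 2·d(p, σ(x,y,1/2)) ≤ d(p,x) + d(p,y) for all p, x, y ∈ X. Let M be a nonempty bounded subset of X that is convex with respect to σ, let W be a nonempty bounded subset of X, let x, y ∈ X, and let ε, δ ≥ 0 with μ = max(ε,δ) > 0. Assume the metric ε-projection P(x,M,ε) = {z ∈ M : d(x,z) ≤ infDist(x,M) + ε} and the metric δ-projection P(y,W,δ) = {z ∈ W : d(y,z) ≤ infDist(y,W) + δ} are nonempty. Then hausdorffDist(P(y,W,δ), P(x,M,ε)) ≤ hausdorffDist(W,M) + (2·infDist(x,M)/μ + 2)·(|ε − δ| + 2·d(x,y) + 2·hausdorffDist(M,W)). -/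

import Mathlib

open Metric Bornology Set

/-- Dyadic interpolation in a convex set with condition (C): for every dyadic
`λ = k/2^n` there is a point `p` of `S` with `dist a p ≤ λ * dist a w` and
`dist b p ≤ (1-λ) * dist b a + λ * dist b w` for every `b`. -/
lemma dyadic_interp_aux {X : Type*} [MetricSpace X]
    (σ : X → X → ℝ → X)
    (hσ0 : ∀ x y : X, σ x y 0 = x) (hσ1 : ∀ x y : X, σ x y 1 = y)
    (hC : ∀ p x y : X, 2 * dist p (σ x y (1 / 2)) ≤ dist p x + dist p y)
    {S : Set X}
    (hconv : ∀ x ∈ S, ∀ y ∈ S, ∀ t ∈ Icc (0 : ℝ) 1, σ x y t ∈ S)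
    {a w : X} (ha : a ∈ S) (hw : w ∈ S) :
    ∀ n k : ℕ, k ≤ 2 ^ n → ∃ p ∈ S,
      dist a p ≤ ((k : ℝ) / 2 ^ n) * dist a w ∧
      ∀ b : X, dist b p ≤ (1 - (k : ℝ) / 2 ^ n) * dist b a + ((k : ℝ) / 2 ^ n) * dist b w := by
  intro n
  induction n with
  | zero =>
    intro k hk
    interval_cases k
    · exact ⟨a, ha, by simp, fun b => by norm_num⟩
    · exact ⟨w, hw, by norm_num, fun b => by norm_num⟩
  | succ n ih =>
    intro k hk
    have h2 : (2 : ℕ) ^ (n + 1) = 2 ^ n + 2 ^ n := by rw [pow_succ]; ring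
    rcases Nat.even_or_odd k with ⟨j, hj⟩ | ⟨j, hj⟩
    · subst hj
      have hjle : j ≤ 2 ^ n := by omega
      obtain ⟨p, hpS, hp1, hp2⟩ := ih j hjle
      have hcoef : ((j + j : ℕ) : ℝ) / 2 ^ (n + 1) = (j : ℝ) / 2 ^ n := by
        push_cast
        field_simp
        ring
      refine ⟨p, hpS, ?_, ?_⟩
      · rw [hcoef]; exact hp1
      · intro b; rw [hcoef]; exact hp2 b
    · subst hj
      have hjle : j ≤ 2 ^ n := by omega
      have hjle1 : j + 1 ≤ 2 ^ n := by omega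
      obtain ⟨p1, h1S, h11, h12⟩ := ih j hjle
      obtain ⟨p2, h2S, h21, h22⟩ := ih (j + 1) hjle1
      refine ⟨σ p1 p2 (1 / 2), hconv _ h1S _ h2S _ (by norm_num), ?_, ?_⟩
      · have hc := hC a p1 p2
        have hcoef : ((2 * j + 1 : ℕ) : ℝ) / 2 ^ (n + 1) * 2
            = (j : ℝ) / 2 ^ n + ((j + 1 : ℕ) : ℝ) / 2 ^ n := by
          push_cast
          field_simp
          ring
        nlinarith [dist_nonneg (x := a) (y := w)]
      · intro b
        have hc := hC b p1 p2
        have h12b := h12 b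
        have h22b := h22 b
        have hcoef : ((2 * j + 1 : ℕ) : ℝ) / 2 ^ (n + 1) * 2
            = (j : ℝ) / 2 ^ n + ((j + 1 : ℕ) : ℝ) / 2 ^ n := by
          push_cast
          field_simp
          ring
        nlinarith [dist_nonneg (x := b) (y := a), dist_nonneg (x := b) (y := w)]

/-- Approximate projection lemma: a point of a convex set `S` whose distance to `b`
exceeds `infDist b S + ρ` by at most `u` is within
`u/(ρ+u) * (2 infDist b S + 2ρ + u)` of the metric `ρ`-projection of `b` onto `S`. -/
lemma approx_proj {X : Type*} [MetricSpace X]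
    (σ : X → X → ℝ → X)
    (hσ0 : ∀ x y : X, σ x y 0 = x) (hσ1 : ∀ x y : X, σ x y 1 = y)
    (hC : ∀ p x y : X, 2 * dist p (σ x y (1 / 2)) ≤ dist p x + dist p y)
    {S : Set X} (hSne : S.Nonempty)
    (hconv : ∀ x ∈ S, ∀ y ∈ S, ∀ t ∈ Icc (0 : ℝ) 1, σ x y t ∈ S)
    (b : X) (ρ : ℝ) (hρ : 0 ≤ ρ)
    (hPne : ({z ∈ S | dist b z ≤ infDist b S + ρ}).Nonempty)
    (a : X) (ha : a ∈ S) (u : ℝ) (hu : 0 < u)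
    (hda : dist b a ≤ infDist b S + ρ + u) :
    infDist a {z ∈ S | dist b z ≤ infDist b S + ρ} ≤
      u / (ρ + u) * (2 * infDist b S + 2 * ρ + u) := by
  set i := infDist b S with hi
  have hi0 : 0 ≤ i := infDist_nonneg
  rcases eq_or_lt_of_le hρ with hρ0 | hρpos
  · -- ρ = 0 : take any element of P
    subst hρ0
    obtain ⟨w, hwS, hwd⟩ := hPne
    have h1 : infDist a {z ∈ S | dist b z ≤ i + 0} ≤ dist a w :=
      infDist_le_dist_of_mem ⟨hwS, hwd⟩
    have h2 : dist a w ≤ dist a b + dist b w := dist_triangle a b w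
    have h3 : dist a b = dist b a := dist_comm a b
    have h4 : u / (0 + u) = 1 := by field_simp; ring
    rw [h4]
    linarith
  · -- ρ > 0
    apply le_of_forall_pos_le_add
    intro η hη
    set c : ℝ := 2 * i + 2 * ρ + u with hc
    have hc0 : 0 < c := by positivity
    set α : ℝ := u / (ρ + u) with hα
    have hρu : 0 < ρ + u := by linarith
    have hα0 : 0 < α := by positivity
    have hα1 : α < 1 := (div_lt_one hρu).2 (by linarith)
    set η' : ℝ := η / c with hη'
    have hη'0 : 0 < η' := by positivity
    obtain ⟨n, hn⟩ := exists_pow_lt_of_lt_one (x := min (1 - α) η') (y := (1/2 : ℝ))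
      (lt_min (by linarith) hη'0) (by norm_num)
    have h2n : (0 : ℝ) < 2 ^ n := by positivity
    have hpow : ((1 : ℝ)/2) ^ n = 1 / 2 ^ n := by
      rw [div_pow]; norm_num
    rw [hpow] at hn
    set k : ℕ := ⌊α * 2 ^ n⌋₊ + 1 with hk
    have hfl : (⌊α * 2 ^ n⌋₊ : ℝ) ≤ α * 2 ^ n := Nat.floor_le (by positivity)
    have hfl2 : α * 2 ^ n < (⌊α * 2 ^ n⌋₊ : ℝ) + 1 := Nat.lt_floor_add_one _
    set lam : ℝ := (k : ℝ) / 2 ^ n with hlam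
    have hlam_gt : α < lam := by
      rw [hlam, lt_div_iff₀ h2n]
      push_cast [hk]
      linarith
    have hlam_le : lam ≤ α + 1 / 2 ^ n := by
      rw [hlam, div_le_iff₀ h2n]
      push_cast [hk]
      have : (1 : ℝ) / 2 ^ n * 2 ^ n = 1 := by field_simp
      nlinarith
    have hmin1 : 1 / 2 ^ n < 1 - α := lt_of_lt_of_le hn (min_le_left _ _)
    have hmin2 : (1 : ℝ) / 2 ^ n < η' := lt_of_lt_of_le hn (min_le_right _ _)
    have hlam_lt1 : lam < 1 := by linarith
    have hkle : k ≤ 2 ^ n := by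
      by_contra hcon
      push_neg at hcon
      have : (2 ^ n : ℝ) + 1 ≤ (k : ℝ) := by
        have : (2 ^ n + 1 : ℕ) ≤ k := hcon
        exact_mod_cast this
      have : (1 : ℝ) < lam := by
        rw [hlam]
        rw [lt_div_iff₀ h2n]
        linarith
      linarith
    -- choose w close to the infimum
    have hg0 : 0 < (ρ + u) * (lam - α) / lam :=
      div_pos (mul_pos hρu (by linarith)) (by linarith)
    obtain ⟨w, hwS, hwd⟩ := (infDist_lt_iff hSne).1
      (show infDist b S < i + (ρ + u) * (lam - α) / lam by rw [← hi]; linarith)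
    obtain ⟨p, hpS, hp1, hp2⟩ := dyadic_interp_aux σ hσ0 hσ1 hC hconv ha hwS n k hkle
    rw [← hlam] at hp1
    have hp2b := hp2 b
    rw [← hlam] at hp2b
    -- p belongs to the ρ-projection set
    have hlamg : lam * ((ρ + u) * (lam - α) / lam) = (ρ + u) * (lam - α) := by
      field_simp
      exact mul_div_cancel_left₀ _ (ne_of_gt (lt_trans hα0 hlam_gt))
    have halg : (ρ + u) * α = u := by
      rw [hα]; field_simp
    have hpP : dist b p ≤ i + ρ := by
      have e1 : (1 - lam) * dist b a ≤ (1 - lam) * (i + ρ + u) :=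
        mul_le_mul_of_nonneg_left hda (by linarith)
      have e2 : lam * dist b w ≤ lam * (i + (ρ + u) * (lam - α) / lam) :=
        mul_le_mul_of_nonneg_left (le_of_lt hwd) (by linarith)
      have e3 : lam * (i + (ρ + u) * (lam - α) / lam) = lam * i + (ρ + u) * (lam - α) := by
        rw [mul_add, hlamg]
      have e4 : (1 - lam) * (i + ρ + u) + (lam * i + (ρ + u) * (lam - α))
          = i + ρ + u - (ρ + u) * α := by ring
      linarith [halg]
    have hfin : infDist a {z ∈ S | dist b z ≤ i + ρ} ≤ dist a p :=
      infDist_le_dist_of_mem ⟨hpS, hpP⟩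
    -- bound dist a p
    have hgρ : (ρ + u) * (lam - α) / lam ≤ ρ := by
      rw [div_le_iff₀ (by linarith)]
      have hulam : u * lam ≤ u * 1 := mul_le_mul_of_nonneg_left hlam_lt1.le hu.le
      have e5 : (ρ + u) * (lam - α) = ρ * lam + u * lam - (ρ + u) * α := by ring
      linarith [halg]
    have haw : dist a w ≤ c := by
      have h6 : dist a w ≤ dist a b + dist b w := dist_triangle a b w
      have h7 : dist a b = dist b a := dist_comm a b
      rw [hc]
      linarith
    have hlamc : lam * c ≤ α * c + η := by
      have h1 : lam ≤ α + η' := by linarith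
      have h2 : lam * c ≤ (α + η') * c := mul_le_mul_of_nonneg_right h1 (le_of_lt hc0)
      have h3 : η' * c = η := by
        rw [hη']; field_simp
      have h8 : (α + η') * c = α * c + η' * c := by ring
      linarith
    have hap : dist a p ≤ lam * c :=
      le_trans hp1 (mul_le_mul_of_nonneg_left haw (by linarith))
    calc infDist a {z ∈ S | dist b z ≤ i + ρ} ≤ dist a p := hfin
      _ ≤ lam * c := hap
      _ ≤ α * c + η := hlamc

set_option maxHeartbeats 1000000 in
/-- Continuity estimate for the metric δ-projection onto a convex set in a geodesic
space satisfying condition (C). -/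
theorem delta_projection_estimate {X : Type*} [MetricSpace X]
    (σ : X → X → ℝ → X)
    (hσ0 : ∀ x y : X, σ x y 0 = x) (hσ1 : ∀ x y : X, σ x y 1 = y)
    (hσd : ∀ x y : X, ∀ s ∈ Icc (0 : ℝ) 1, ∀ t ∈ Icc (0 : ℝ) 1,
      dist (σ x y s) (σ x y t) = |s - t| * dist x y)
    (hC : ∀ p x y : X, 2 * dist p (σ x y (1 / 2)) ≤ dist p x + dist p y)
    (M W : Set X)
    (hMne : M.Nonempty) (hMb : IsBounded M)
    (hMconv : ∀ x ∈ M, ∀ y ∈ M, ∀ t ∈ Icc (0 : ℝ) 1, σ x y t ∈ M)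
    (hWne : W.Nonempty) (hWb : IsBounded W)
    (x y : X) (ε δ : ℝ) (hε : 0 ≤ ε) (hδ : 0 ≤ δ)
    (hμ : 0 < max ε δ)
    (hPx : ({z ∈ M | dist x z ≤ infDist x M + ε}).Nonempty)
    (hPy : ({z ∈ W | dist y z ≤ infDist y W + δ}).Nonempty) :
    hausdorffDist {z ∈ W | dist y z ≤ infDist y W + δ} {z ∈ M | dist x z ≤ infDist x M + ε} ≤
      hausdorffDist W M +
        (2 * infDist x M / max ε δ + 2) *
          (|ε - δ| + 2 * dist x y + 2 * hausdorffDist M W) := by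
  set r := infDist x M with hr
  set s := infDist y W with hs
  have hedistMW : EMetric.hausdorffEdist M W ≠ ⊤ :=
    hausdorffEdist_ne_top_of_nonempty_of_bounded hMne hWne hMb hWb
  have hedistWM : EMetric.hausdorffEdist W M ≠ ⊤ := by
    rw [EMetric.hausdorffEdist, EMetric.hausdorffEdist_comm]; exact hedistMW
  set H := hausdorffDist M W with hH
  have hHWM : hausdorffDist W M = H := hausdorffDist_comm
  set μ := max ε δ with hμdef
  set D := dist x y with hD
  set K := |ε - δ| + 2 * D + 2 * H with hK
  have hr0 : 0 ≤ r := infDist_nonneg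
  have hs0 : 0 ≤ s := infDist_nonneg
  have hH0 : 0 ≤ H := hausdorffDist_nonneg
  have hD0 : 0 ≤ D := dist_nonneg
  have habs : 0 ≤ |ε - δ| := abs_nonneg _
  have hK0 : 0 ≤ K := by rw [hK]; linarith
  have hεμ : ε ≤ μ := le_max_left ε δ
  have hδμ : δ ≤ μ := le_max_right ε δ
  have hcoef0 : 0 ≤ 2 * r / μ + 2 := by positivity
  have hrs : r ≤ D + s + H := by
    have h1 : infDist x M ≤ infDist y M + dist x y := infDist_le_infDist_add_dist
    have h2 : infDist y M ≤ infDist y W + hausdorffDist W M :=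
      infDist_le_infDist_add_hausdorffDist hedistWM
    rw [hHWM] at h2
    rw [hr]
    linarith
  have hsr : s ≤ D + r + H := by
    have h1 : infDist y W ≤ infDist x W + dist y x := infDist_le_infDist_add_dist
    have h2 : infDist x W ≤ infDist x M + hausdorffDist M W :=
      infDist_le_infDist_add_hausdorffDist hedistMW
    have h3 : dist y x = D := by rw [hD, dist_comm]
    rw [hs]
    rw [h3] at h1
    linarith
  have hμδ : μ - δ ≤ |ε - δ| := by
    rcases le_total ε δ with h | h
    · rw [hμdef, max_eq_right h]; linarith
    · rw [hμdef, max_eq_left h]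
      have : ε - δ ≤ |ε - δ| := le_abs_self _
      linarith
  have hμε : μ - ε ≤ |ε - δ| := by
    rcases le_total ε δ with h | h
    · rw [hμdef, max_eq_right h]
      have : δ - ε ≤ |ε - δ| := by rw [abs_sub_comm]; exact le_abs_self _
      linarith
    · rw [hμdef, max_eq_left h]; linarith
  clear_value r s H μ D K
  rw [hHWM]
  apply hausdorffDist_le_of_infDist
  · exact add_nonneg hH0 (mul_nonneg hcoef0 hK0)
  · -- direction 1 : points of P_y are close to P_x
    rintro z ⟨hzW, hzy⟩
    apply le_of_forall_pos_le_add
    intro η hη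
    have hcoef3 : 0 < 2 * r / μ + 3 := by positivity
    set η1 := η / (2 * r / μ + 3) with hη1def
    have hη1 : 0 < η1 := div_pos hη hcoef3
    clear_value η1
    have h1 : infDist z M ≤ H := by
      have := infDist_le_hausdorffDist_of_mem hzW hedistWM
      rw [hHWM] at this; exact this
    obtain ⟨z', hz'M, hzz'⟩ := (infDist_lt_iff hMne).1
      (lt_of_le_of_lt h1 (by linarith : H < H + η1))
    set u := max (2 * D + 2 * H + δ - ε + η1) (μ - ε + η1) with hudef
    have hu2 : μ - ε + η1 ≤ u := le_max_right _ _
    have hu1 : 2 * D + 2 * H + δ - ε + η1 ≤ u := le_max_left _ _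
    clear_value u
    have hu0 : 0 < u := by linarith
    have hμle : μ ≤ ε + u := by linarith
    have hKη : 0 ≤ K + η1 := by linarith
    have huK : u ≤ K + η1 := by
      rw [hudef]
      apply max_le
      · have : δ - ε ≤ |ε - δ| := by rw [abs_sub_comm]; exact le_abs_self _
        rw [hK]; linarith
      · rw [hK]; linarith
    have hxz' : dist x z' ≤ r + ε + u := by
      have t4 : dist x z' ≤ dist x y + dist y z + dist z z' := dist_triangle4 x y z z'
      rw [← hD] at t4
      linarith
    have hPx' : ({z ∈ M | dist x z ≤ infDist x M + ε}).Nonempty := by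
      rw [← hr]; exact hPx
    have hxz'' : dist x z' ≤ infDist x M + ε + u := by rw [← hr]; exact hxz'
    have hB := approx_proj σ hσ0 hσ1 hC hMne hMconv x ε hε hPx' z' hz'M u hu0 hxz''
    rw [← hr] at hB
    have htri : infDist z {z ∈ M | dist x z ≤ r + ε} ≤
        infDist z' {z ∈ M | dist x z ≤ r + ε} + dist z z' := infDist_le_infDist_add_dist
    have hεu : 0 < ε + u := by linarith
    have key : u * (2 * r + 2 * ε + u) * μ ≤ (2 * r + 2 * μ) * (K + η1) * (ε + u) := by
      have A1 : u * μ ≤ (K + η1) * (ε + u) := mul_le_mul huK hμle hμ.le hKη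
      have A2 : 2 * r * (u * μ) ≤ 2 * r * ((K + η1) * (ε + u)) :=
        mul_le_mul_of_nonneg_left A1 (by linarith)
      have A3 : ε * u ≤ ε * (K + η1) := mul_le_mul_of_nonneg_left huK hε
      have A4 : u * u ≤ (K + η1) * u := mul_le_mul_of_nonneg_right huK hu0.le
      have A5 : (2 * (ε * u) + u * u) * μ ≤ (2 * (ε * (K + η1)) + (K + η1) * u) * μ :=
        mul_le_mul_of_nonneg_right (by linarith) hμ.le
      have A6 : 0 ≤ μ * ((K + η1) * u) := mul_nonneg hμ.le (mul_nonneg hKη hu0.le)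
      have E1 : u * (2 * r + 2 * ε + u) * μ = 2 * r * (u * μ) + (2 * (ε * u) + u * u) * μ := by
        ring
      have E2 : (2 * r + 2 * μ) * (K + η1) * (ε + u) =
          2 * r * ((K + η1) * (ε + u)) + (2 * (ε * (K + η1)) + (K + η1) * u) * μ +
            μ * ((K + η1) * u) := by ring
      linarith only [A2, A5, A6, E1, E2]
    have harith : u / (ε + u) * (2 * r + 2 * ε + u) ≤ (2 * r / μ + 2) * (K + η1) := by
      have h2 : u / (ε + u) * (2 * r + 2 * ε + u) = u * (2 * r + 2 * ε + u) / (ε + u) := by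
        ring
      have h3 : (2 * r / μ + 2) * (K + η1) = (2 * r + 2 * μ) * (K + η1) / μ := by
        field_simp
      rw [h2, h3, div_le_div_iff₀ hεu hμ]
      linarith only [key]
    have hη1eq : η1 * (2 * r / μ + 3) = η := by
      rw [hη1def]; exact div_mul_cancel₀ η (ne_of_gt hcoef3)
    have hexp : (2 * r / μ + 2) * (K + η1) = (2 * r / μ + 2) * K + (2 * r / μ + 2) * η1 := by
      ring
    have h9 : (2 * r / μ + 2) * η1 + η1 = η := by rw [← hη1eq]; ring
    linarith only [hB, htri, harith, hzz'.le, hexp, h9]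
  · -- direction 2 : points of P_x are close to P_y
    rintro z ⟨hzM, hzx⟩
    apply le_of_forall_pos_le_add
    intro η hη
    have hB0 : 0 ≤ (2 * r / μ + 2) * K := mul_nonneg hcoef0 hK0
    have hexp : (2 * r / μ + 2) * K = 2 * r * K / μ + 2 * K := by ring
    rcases le_or_gt μ K with hμK | hKμ
    · -- crude case : μ ≤ K
      obtain ⟨w0, hw0W, hw0P, hw0d⟩ :
          ∃ w0 ∈ W, dist y w0 ≤ s + δ ∧ dist y w0 ≤ s + η := by
        rcases lt_or_ge 0 δ with hδ0 | hδ0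
        · have hmin : 0 < min δ η := lt_min hδ0 hη
          obtain ⟨w0, hw0W, hw0d⟩ := (infDist_lt_iff hWne).1
            (show infDist y W < s + min δ η by rw [← hs]; linarith)
          have hd1 : min δ η ≤ δ := min_le_left δ η
          have hd2 : min δ η ≤ η := min_le_right δ η
          exact ⟨w0, hw0W, by linarith [hw0d.le], by linarith [hw0d.le]⟩
        · have hδ0' : δ = 0 := le_antisymm hδ0 hδ
          obtain ⟨w0, hw0W, hw0d⟩ := hPy
          refine ⟨w0, hw0W, hw0d, ?_⟩
          rw [hδ0'] at hw0d
          linarith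
      have h1 : infDist z {z ∈ W | dist y z ≤ s + δ} ≤ dist z w0 :=
        infDist_le_dist_of_mem ⟨hw0W, hw0P⟩
      have h2 : dist z w0 ≤ dist z x + dist x y + dist y w0 := dist_triangle4 z x y w0
      have h3 : dist z x = dist x z := dist_comm z x
      have h4 : 2 * r ≤ 2 * r * K / μ := by
        rw [le_div_iff₀ hμ]
        have := mul_le_mul_of_nonneg_left hμK (by linarith : (0:ℝ) ≤ 2 * r)
        linarith
      have h5 : 2 * D + 2 * H ≤ K := by rw [hK]; linarith
      have h6 : ε ≤ K := le_trans hεμ hμK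
      linarith only [h1, h2, h3, hD, hzx, hw0d, hsr, h4, h5, h6, hexp, hH0]
    · -- refined case : K < μ, so δ > 2D + 2H and we can move inside M first
      have hgap : 0 < δ - 2 * D - 2 * H := by
        rw [hK] at hKμ
        linarith [hμδ]
      rcases le_or_gt (dist x z) (r + (δ - 2 * D - 2 * H) / 2) with hclose | hfar
      · -- z is already near the infimum level : jump directly to W
        have hη1 : 0 < min ((δ - 2 * D - 2 * H) / 2) (η / 2) :=
          lt_min (by linarith) (by linarith)
        set η1 := min ((δ - 2 * D - 2 * H) / 2) (η / 2) with hη1def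
        have hη1a : η1 ≤ (δ - 2 * D - 2 * H) / 2 := min_le_left _ _
        have hη1b : η1 ≤ η / 2 := min_le_right _ _
        have hzW : infDist z W ≤ H := by
          have := infDist_le_hausdorffDist_of_mem hzM hedistMW
          rw [← hH] at this; exact this
        obtain ⟨w, hwW, hwd⟩ := (infDist_lt_iff hWne).1
          (lt_of_le_of_lt hzW (by linarith : H < H + η1))
        have hwP : dist y w ≤ s + δ := by
          have t4 : dist y w ≤ dist y x + dist x z + dist z w := dist_triangle4 y x z w
          have h3 : dist y x = D := by rw [hD, dist_comm]
          rw [h3] at t4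
          linarith
        have h1 : infDist z {z ∈ W | dist y z ≤ s + δ} ≤ dist z w :=
          infDist_le_dist_of_mem ⟨hwW, hwP⟩
        linarith
      · -- z has genuine excess : move inside M with margin ρ', then jump to W
        have hε0 : 0 < ε := by linarith
        have hC0 : 0 < 2 * r / ε + 5 := by positivity
        have hη1 : 0 < min ((δ - 2 * D - 2 * H) / 2) (η / (2 * r / ε + 5)) :=
          lt_min (by linarith) (div_pos hη hC0)
        set η1 := min ((δ - 2 * D - 2 * H) / 2) (η / (2 * r / ε + 5)) with hη1def
        have hη1a : η1 ≤ (δ - 2 * D - 2 * H) / 2 := min_le_left _ _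
        have hη1b : η1 ≤ η / (2 * r / ε + 5) := min_le_right _ _
        set ρ' := δ - 2 * D - 2 * H - η1 with hρ'def
        have hρ'pos : 0 < ρ' := by rw [hρ'def]; linarith
        rcases le_or_gt (dist x z) (r + ρ') with hz2 | hz3
        · -- no movement needed
          have hzW : infDist z W ≤ H := by
            have := infDist_le_hausdorffDist_of_mem hzM hedistMW
            rw [← hH] at this; exact this
          obtain ⟨w, hwW, hwd⟩ := (infDist_lt_iff hWne).1
            (lt_of_le_of_lt hzW (by linarith : H < H + η1))
          have hwP : dist y w ≤ s + δ := by
            have t4 : dist y w ≤ dist y x + dist x z + dist z w := dist_triangle4 y x z w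
            have h3 : dist y x = D := by rw [hD, dist_comm]
            rw [h3] at t4
            rw [hρ'def] at hz2
            linarith
          have h1 : infDist z {z ∈ W | dist y z ≤ s + δ} ≤ dist z w :=
            infDist_le_dist_of_mem ⟨hwW, hwP⟩
          have hηb : η1 ≤ η := by
            have h0 : 0 ≤ 2 * r / ε := by positivity
            have h11 : (2 * r / ε + 5) * η1 ≤ (2 * r / ε + 5) * (η / (2 * r / ε + 5)) :=
              mul_le_mul_of_nonneg_left hη1b hC0.le
            have h12 : (2 * r / ε + 5) * (η / (2 * r / ε + 5)) = η := by
              rw [mul_comm]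
              exact div_mul_cancel₀ η (ne_of_gt hC0)
            have h13 : 0 ≤ 2 * r / ε * η1 := mul_nonneg h0 hη1.le
            have E : (2 * r / ε + 5) * η1 = 2 * r / ε * η1 + 5 * η1 := by ring
            linarith only [h11, h12, h13, E, hη1.le]
          linarith
        · -- genuine movement inside M
          set u := ε - ρ' with hudef
          have hu0 : 0 < u := by rw [hudef]; linarith
          have hP'ne : ({m ∈ M | dist x m ≤ infDist x M + ρ'}).Nonempty := by
            obtain ⟨m0, hm0M, hm0d⟩ := (infDist_lt_iff hMne).1
              (show infDist x M < infDist x M + ρ' by linarith [hρ'pos])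
            exact ⟨m0, hm0M, hm0d.le⟩
          have hxzu : dist x z ≤ infDist x M + ρ' + u := by
            rw [← hr, hudef]
            linarith
          have hB := approx_proj σ hσ0 hσ1 hC hMne hMconv x ρ' hρ'pos.le hP'ne z hzM u hu0 hxzu
          rw [← hr] at hB
          have hP'ne' : ({m ∈ M | dist x m ≤ r + ρ'}).Nonempty := by
            rw [hr]; exact hP'ne
          have hBlt : infDist z {m ∈ M | dist x m ≤ infDist x M + ρ'} <
              u / (ρ' + u) * (2 * r + 2 * ρ' + u) + η1 := by
            rw [hr]
            rw [hr] at hB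
            linarith
          obtain ⟨p, hpP, hpd⟩ := (infDist_lt_iff hP'ne).1 hBlt
          obtain ⟨hpM, hpx⟩ := hpP
          rw [← hr] at hpx
          have hpW : infDist p W ≤ H := by
            have := infDist_le_hausdorffDist_of_mem hpM hedistMW
            rw [← hH] at this; exact this
          obtain ⟨w, hwW, hwd⟩ := (infDist_lt_iff hWne).1
            (lt_of_le_of_lt hpW (by linarith : H < H + η1))
          have hwP : dist y w ≤ s + δ := by
            have t4 : dist y w ≤ dist y x + dist x p + dist p w := dist_triangle4 y x p w
            have h3 : dist y x = D := by rw [hD, dist_comm]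
            rw [h3] at t4
            rw [hρ'def] at hpx
            linarith
          have h1 : infDist z {z ∈ W | dist y z ≤ s + δ} ≤ dist z w :=
            infDist_le_dist_of_mem ⟨hwW, hwP⟩
          have h2 : dist z w ≤ dist z p + dist p w := dist_triangle z p w
          -- arithmetic : u/(ρ'+u) * (2r + 2ρ' + u) ≤ 2rK/μ + 2K + (2r/ε + 2) * η1
          have hρu : ρ' + u = ε := by rw [hudef]; ring
          have key2 : u * μ ≤ K * ε + η1 * μ := by
            have hu_eq : u = ε - δ + 2 * D + 2 * H + η1 := by
              rw [hudef, hρ'def]; ring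
            rcases le_total ε δ with hcase | hcase
            · have hμeq : μ = δ := by rw [hμdef, max_eq_right hcase]
              have hKeq : K = δ - ε + 2 * D + 2 * H := by
                rw [hK, abs_sub_comm, abs_of_nonneg (by linarith)]
              have hprod : 0 ≤ (δ - ε) * (δ + ε - (2 * D + 2 * H)) :=
                mul_nonneg (by linarith) (by linarith)
              rw [hu_eq, hμeq, hKeq]
              have E : (δ - ε + 2 * D + 2 * H) * ε + η1 * δ -
                  (ε - δ + 2 * D + 2 * H + η1) * δ
                  = (δ - ε) * (δ + ε - (2 * D + 2 * H)) := by ring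
              linarith only [hprod, E]
            · have hμeq : μ = ε := by rw [hμdef, max_eq_left hcase]
              have hKeq : K = ε - δ + 2 * D + 2 * H := by
                rw [hK, abs_of_nonneg (by linarith)]
              rw [hu_eq, hμeq, hKeq]
              have hne : 0 ≤ η1 * ε := mul_nonneg hη1.le hε0.le
              have E : (ε - δ + 2 * D + 2 * H) * ε + η1 * ε -
                  (ε - δ + 2 * D + 2 * H + η1) * ε = 0 := by ring
              linarith only [hne, E]
          have harith : u / (ρ' + u) * (2 * r + 2 * ρ' + u) ≤
              2 * r * K / μ + 2 * K + (2 * r / ε + 2) * η1 := by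
            rw [hρu]
            have hrw : u / ε * (2 * r + 2 * ρ' + u) = (2 * r * u + (2 * ρ' + u) * u) / ε := by
              field_simp
              ring
            rw [hrw]
            rw [div_le_iff₀ hε0]
            -- goal : 2ru + (2ρ'+u)u ≤ (2rK/μ + 2K + (2r/ε+2)η1) * ε
            have huK : u ≤ K + η1 := by
              have s1 : K * ε ≤ K * μ := mul_le_mul_of_nonneg_left hεμ hK0
              have E : (K + η1) * μ = K * μ + η1 * μ := by ring
              have s2 : u * μ ≤ (K + η1) * μ := by linarith only [key2, s1, E]
              exact le_of_mul_le_mul_right s2 hμ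
            have huε : u ≤ ε := by rw [hudef]; linarith
            have T1 : 2 * r * u ≤ (2 * r * K / μ) * ε + (2 * r / ε * η1) * ε := by
              have e1 : (2 * r * K / μ) * ε + (2 * r / ε * η1) * ε
                  = 2 * r * (K * ε / μ + η1) := by field_simp
              rw [e1]
              have e2 : u ≤ K * ε / μ + η1 := by
                rw [div_add' _ _ _ (ne_of_gt hμ), le_div_iff₀ hμ]
                linarith [key2]
              exact mul_le_mul_of_nonneg_left e2 (by linarith)
            have T2 : (2 * ρ' + u) * u ≤ (2 * K + 2 * η1) * ε := by
              have e3 : 2 * ρ' + u ≤ 2 * ε := by rw [hudef]; linarith [hρ'pos]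
              have e4 : (2 * ρ' + u) * u ≤ 2 * ε * u :=
                mul_le_mul_of_nonneg_right e3 hu0.le
              have e5 : 2 * ε * u ≤ 2 * ε * (K + η1) :=
                mul_le_mul_of_nonneg_left huK (by linarith)
              have E : 2 * ε * (K + η1) = (2 * K + 2 * η1) * ε := by ring
              linarith only [e4, e5, E]
            have E : (2 * r * K / μ + 2 * K + (2 * r / ε + 2) * η1) * ε =
                2 * r * K / μ * ε + 2 * r / ε * η1 * ε + (2 * K + 2 * η1) * ε := by
              ring
            rw [E]
            have TT := add_le_add T1 T2
            linarith only [TT]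
          have hfinal : (2 * r / ε + 2) * η1 + η1 + η1 ≤ η := by
            have e7 : (2 * r / ε + 5) * η1 ≤ η := by
              have h10 := mul_le_mul_of_nonneg_left hη1b hC0.le
              have h11 : (2 * r / ε + 5) * (η / (2 * r / ε + 5)) = η := by
                rw [mul_comm]
                exact div_mul_cancel₀ η (ne_of_gt hC0)
              linarith only [h10, h11]
            have E : (2 * r / ε + 5) * η1 = (2 * r / ε + 2) * η1 + η1 + η1 + η1 := by ring
            linarith only [e7, E, hη1.le]
          linarith only [h1, h2, hpd, hwd, harith, hfinal, hexp, hB0]
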